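/- Let m ≥ 0, 0 ≤ s ≤ m, Im τ > 0, and let Θ_{j,m+1}(τ,z) = Σ_{n∈ℤ} e^{2πi(m+1)z(n + j/(2(m+1)))} q^{(m+1)(n + j/(2(m+1)))²}. Then Φ₁(τ,z₁,z₂) − e^{2πi(m+1)z₁} Φ₁(τ,z₁,z₂+τ) = Σ_{k=0}^{m} e^{πi(k−s)(z₁−z₂)} q^{−(k−s)²/(4(m+1))} Θ_{k−s,m+1}(τ, z₁+z₂). -/

import Mathlib

noncomputable section

open Complex

/-- The mock theta numerator `Φ₁^{[m;s]}(τ,z₁,z₂)`, with `q = e^{2πiτ}`. -/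
def Phi1 (m : ℕ) (s : ℤ) (τ z₁ z₂ : ℂ) : ℂ :=
  ∑' j : ℤ,
    Complex.exp (2 * (Real.pi : ℂ) * I * ((m : ℂ) + 1) * (j : ℂ) * (z₁ + z₂)) *
      Complex.exp (-(2 * (Real.pi : ℂ) * I) * (s : ℂ) * z₁) *
      Complex.exp (2 * (Real.pi : ℂ) * I * τ) ^ (j ^ 2 * ((m : ℤ) + 1) - j * s) /
      (1 - Complex.exp (2 * (Real.pi : ℂ) * I * z₁) * Complex.exp (2 * (Real.pi : ℂ) * I * τ) ^ j)

/-- The classical theta function `Θ_{j,m₁}(τ,z)` of degree `m₁`,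
where `q^x = e^{2πiτx}`. -/
def Theta (j : ℤ) (m₁ : ℕ) (τ z : ℂ) : ℂ :=
  ∑' n : ℤ,
    Complex.exp (2 * (Real.pi : ℂ) * I * (m₁ : ℂ) * z * ((n : ℂ) + (j : ℂ) / (2 * (m₁ : ℂ)))) *
      Complex.exp (2 * (Real.pi : ℂ) * I * τ * (m₁ : ℂ) * ((n : ℂ) + (j : ℂ) / (2 * (m₁ : ℂ))) ^ 2)

namespace Stmt3Aux

open Filter

/-- The numerator of the `j`-th term of `Phi1`. -/
def Nterm (m : ℕ) (s : ℤ) (τ z₁ z₂ : ℂ) (j : ℤ) : ℂ :=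
  Complex.exp (2 * (Real.pi : ℂ) * I * ((m : ℂ) + 1) * (j : ℂ) * (z₁ + z₂)) *
    Complex.exp (-(2 * (Real.pi : ℂ) * I) * (s : ℂ) * z₁) *
    Complex.exp (2 * (Real.pi : ℂ) * I * τ) ^ (j ^ 2 * ((m : ℤ) + 1) - j * s)

/-- `x_j = e^{2πiz₁} q^j`. -/
def xe (τ z₁ : ℂ) (j : ℤ) : ℂ :=
  Complex.exp (2 * (Real.pi : ℂ) * I * z₁) * Complex.exp (2 * (Real.pi : ℂ) * I * τ) ^ j

lemma phi1_eq (m : ℕ) (s : ℤ) (τ z₁ z₂ : ℂ) :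
    Phi1 m s τ z₁ z₂ = ∑' j : ℤ, Nterm m s τ z₁ z₂ j / (1 - xe τ z₁ j) := rfl

lemma exp_zpow (w : ℂ) (n : ℤ) : Complex.exp w ^ n = Complex.exp ((n : ℂ) * w) :=
  (Complex.exp_int_mul w n).symm

lemma im_2Mτ (M : ℕ) (τ : ℂ) : (2 * (M : ℂ) * τ).im = 2 * M * τ.im := by
  simp [Complex.mul_im]

lemma summable_of_theta_shape {f : ℤ → ℂ} {M : ℕ} {τ : ℂ} (C Z : ℂ)
    (hM : 0 < M) (hτ : 0 < τ.im)
    (h : ∀ j : ℤ, f j = C * jacobiTheta₂_term j Z (2 * (M : ℂ) * τ)) : Summable f := by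
  have him : 0 < (2 * (M : ℂ) * τ).im := by
    rw [im_2Mτ]; positivity
  have hsum : Summable (jacobiTheta₂_term · Z (2 * (M : ℂ) * τ)) :=
    (summable_jacobiTheta₂_term_iff _ _).mpr him
  exact (funext h : f = _) ▸ hsum.mul_left C

lemma norm_x (τ z₁ : ℂ) (j : ℤ) :
    ‖Complex.exp (2 * (Real.pi : ℂ) * I * z₁) * Complex.exp (2 * (Real.pi : ℂ) * I * τ) ^ j‖
      = Real.exp (-(2 * Real.pi * z₁.im) + (j : ℝ) * (-(2 * Real.pi * τ.im))) := by
  rw [exp_zpow, ← Complex.exp_add, Complex.norm_exp]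
  congr 1
  simp [Complex.add_re, Complex.mul_re, Complex.mul_im]

lemma inv_bound (τ z₁ : ℂ) (hτ : 0 < τ.im) :
    ∀ᶠ j : ℤ in cofinite, ‖(1 - xe τ z₁ j)⁻¹‖ ≤ 2 := by
  have hb : (-(2 * Real.pi * τ.im)) < 0 := by
    have := Real.pi_pos; nlinarith
  rw [Int.cofinite_eq, eventually_sup]
  constructor
  · -- atBot : ‖x j‖ → ∞
    have hlin : Tendsto (fun j : ℤ => -(2 * Real.pi * z₁.im) + (j : ℝ) * (-(2 * Real.pi * τ.im)))
        atBot atTop := by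
      apply tendsto_atTop_add_const_left
      exact Tendsto.atBot_mul_const_of_neg hb (tendsto_intCast_atBot_iff.mpr tendsto_id)
    have hx : Tendsto (fun j : ℤ => ‖xe τ z₁ j‖) atBot atTop := by
      simp only [xe, norm_x]
      exact Real.tendsto_exp_atTop.comp hlin
    filter_upwards [hx.eventually_ge_atTop 2] with j hj
    rw [norm_inv]
    have h1 : (1 : ℝ) ≤ ‖1 - xe τ z₁ j‖ := by
      calc (1 : ℝ) ≤ ‖xe τ z₁ j‖ - ‖(1 : ℂ)‖ := by rw [norm_one]; linarith
        _ ≤ _ := by rw [norm_sub_rev]; exact norm_sub_norm_le _ _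
    calc ‖1 - xe τ z₁ j‖⁻¹ ≤ (1 : ℝ)⁻¹ := by
          exact inv_anti₀ one_pos h1
      _ ≤ 2 := by norm_num
  · -- atTop : ‖x j‖ → 0
    have hlin : Tendsto (fun j : ℤ => -(2 * Real.pi * z₁.im) + (j : ℝ) * (-(2 * Real.pi * τ.im)))
        atTop atBot := by
      apply tendsto_atBot_add_const_left
      exact Tendsto.atTop_mul_const_of_neg hb tendsto_intCast_atTop_atTop
    have hx : Tendsto (fun j : ℤ => ‖xe τ z₁ j‖) atTop (nhds 0) := by
      simp only [xe, norm_x]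
      exact Real.tendsto_exp_atBot.comp hlin
    filter_upwards [hx.eventually_lt_const (by norm_num : (0:ℝ) < 1/2)] with j hj
    rw [norm_inv]
    have h1 : (1/2 : ℝ) ≤ ‖1 - xe τ z₁ j‖ := by
      calc (1/2 : ℝ) ≤ ‖(1 : ℂ)‖ - ‖xe τ z₁ j‖ := by rw [norm_one]; linarith
        _ ≤ _ := norm_sub_norm_le _ _
    calc ‖1 - xe τ z₁ j‖⁻¹ ≤ (1/2 : ℝ)⁻¹ := by
          exact inv_anti₀ (by norm_num) h1
      _ ≤ 2 := by norm_num

lemma summable_of_theta_shape_div {f : ℤ → ℂ} {M : ℕ} {τ : ℂ} (C Z z₁ : ℂ)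
    (hM : 0 < M) (hτ : 0 < τ.im)
    (h : ∀ j : ℤ, f j = C * jacobiTheta₂_term j Z (2 * (M : ℂ) * τ) / (1 - xe τ z₁ j)) :
    Summable f := by
  have hT : (0:ℝ) < 2 * M * τ.im := by positivity
  apply Summable.of_norm_bounded_eventually
    (g := fun j : ℤ => ‖C‖ * 2 *
      Real.exp (-Real.pi * ((2 * M * τ.im) * (j:ℤ) ^ 2 - 2 * |Z.im| * |(j:ℤ)|)))
  · have := (summable_pow_mul_jacobiTheta₂_term_bound |Z.im| hT 0).mul_left (‖C‖ * 2)
    simpa using this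
  · filter_upwards [inv_bound τ z₁ hτ] with j hj
    rw [h j, div_eq_mul_inv, norm_mul, norm_mul]
    have hθ : ‖jacobiTheta₂_term j Z (2 * (M : ℂ) * τ)‖ ≤
        Real.exp (-Real.pi * ((2 * M * τ.im) * (j:ℤ) ^ 2 - 2 * |Z.im| * |(j:ℤ)|)) := by
      have := norm_jacobiTheta₂_term_le hT (le_refl |Z.im|) (le_of_eq (im_2Mτ M τ).symm) j
      simpa using this
    calc ‖C‖ * ‖jacobiTheta₂_term j Z (2 * (M : ℂ) * τ)‖ * ‖(1 - xe τ z₁ j)⁻¹‖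
        ≤ ‖C‖ * Real.exp (-Real.pi * ((2 * M * τ.im) * (j:ℤ) ^ 2 - 2 * |Z.im| * |(j:ℤ)|)) * 2 := by
          apply mul_le_mul
          · exact mul_le_mul_of_nonneg_left hθ (norm_nonneg _)
          · exact hj
          · exact norm_nonneg _
          · positivity
      _ = _ := by ring

lemma denom_ne (τ z₁ : ℂ) (hpole : ∀ n j : ℤ, z₁ ≠ (n : ℂ) + (j : ℂ) * τ) (j : ℤ) :
    1 - xe τ z₁ j ≠ 0 := by
  rw [xe, sub_ne_zero]
  intro h
  rw [exp_zpow, ← Complex.exp_add] at h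
  obtain ⟨n, hn⟩ := Complex.exp_eq_one_iff.mp h.symm
  apply hpole n (-j)
  have h2 : (2 * (Real.pi : ℂ) * I) ≠ 0 := by
    simp [Real.pi_ne_zero, Complex.I_ne_zero]
  apply mul_left_cancel₀ h2
  push_cast
  linear_combination hn

end Stmt3Aux

open Stmt3Aux Filter

theorem stmt3 (m : ℕ) (s : ℤ) (hs0 : 0 ≤ s) (hs1 : s ≤ (m : ℤ))
    (τ z₁ z₂ : ℂ) (hτ : 0 < τ.im)
    (hpole : ∀ n j : ℤ, z₁ ≠ (n : ℂ) + (j : ℂ) * τ) :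
    Phi1 m s τ z₁ z₂ -
        Complex.exp (2 * (Real.pi : ℂ) * I * ((m : ℂ) + 1) * z₁) * Phi1 m s τ z₁ (z₂ + τ) =
      ∑ k ∈ Finset.range (m + 1),
        Complex.exp ((Real.pi : ℂ) * I * ((k : ℂ) - (s : ℂ)) * (z₁ - z₂)) *
          Complex.exp (-(2 * (Real.pi : ℂ) * I * τ) *
            ((k : ℂ) - (s : ℂ)) ^ 2 / (4 * ((m : ℂ) + 1))) *
          Theta ((k : ℤ) - s) (m + 1) τ (z₁ + z₂) := by
  have hMc : ((m : ℂ) + 1) ≠ 0 := by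
    have := Nat.cast_add_one_ne_zero (R := ℂ) m
    simpa using this
  have hM0 : 0 < m + 1 := Nat.succ_pos m
  have hD : ∀ j : ℤ, (1 - xe τ z₁ j) ≠ 0 := fun j => denom_ne τ z₁ hpole j
  -- summability of the two Phi1 series
  have hS1 : Summable (fun j : ℤ => Nterm m s τ z₁ z₂ j / (1 - xe τ z₁ j)) := by
    apply summable_of_theta_shape_div (M := m + 1)
      (Complex.exp (-(2 * (Real.pi : ℂ) * I) * (s : ℂ) * z₁))
      (((m : ℂ) + 1) * (z₁ + z₂) + ((-s : ℤ) : ℂ) * τ) z₁ hM0 hτ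
    intro j
    simp only [Nterm, jacobiTheta₂_term, exp_zpow, ← Complex.exp_add]
    congr 2
    push_cast
    ring
  have hS2 : Summable (fun j : ℤ => Nterm m s τ z₁ (z₂ + τ) j / (1 - xe τ z₁ j)) := by
    apply summable_of_theta_shape_div (M := m + 1)
      (Complex.exp (-(2 * (Real.pi : ℂ) * I) * (s : ℂ) * z₁))
      (((m : ℂ) + 1) * (z₁ + z₂ + τ) + ((-s : ℤ) : ℂ) * τ) z₁ hM0 hτ
    intro j
    simp only [Nterm, jacobiTheta₂_term, exp_zpow, ← Complex.exp_add]
    congr 2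
    push_cast
    ring
  -- summability of the k-th partial series
  have hSk : ∀ k : ℕ, Summable (fun j : ℤ => Nterm m s τ z₁ z₂ j * xe τ z₁ j ^ k) := by
    intro k
    apply summable_of_theta_shape (M := m + 1)
      (Complex.exp (-(2 * (Real.pi : ℂ) * I) * (s : ℂ) * z₁) *
        Complex.exp ((k : ℂ) * (2 * (Real.pi : ℂ) * I * z₁)))
      (((m : ℂ) + 1) * (z₁ + z₂) + (((k : ℤ) - s : ℤ) : ℂ) * τ) hM0 hτ
    intro j
    simp only [Nterm, xe, jacobiTheta₂_term, mul_pow, exp_zpow, ← Complex.exp_nat_mul,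
      ← Complex.exp_add]
    congr 1
    push_cast
    ring
  -- termwise difference identity
  have hdiff : ∀ j : ℤ,
      Nterm m s τ z₁ z₂ j / (1 - xe τ z₁ j) -
        Complex.exp (2 * (Real.pi : ℂ) * I * ((m : ℂ) + 1) * z₁) *
          (Nterm m s τ z₁ (z₂ + τ) j / (1 - xe τ z₁ j)) =
      ∑ k ∈ Finset.range (m + 1), Nterm m s τ z₁ z₂ j * xe τ z₁ j ^ k := by
    intro j
    have step1 : Complex.exp (2 * (Real.pi : ℂ) * I * ((m : ℂ) + 1) * z₁) *
        Nterm m s τ z₁ (z₂ + τ) j = Nterm m s τ z₁ z₂ j * xe τ z₁ j ^ (m + 1) := by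
      simp only [Nterm, xe, mul_pow, exp_zpow, ← Complex.exp_nat_mul, ← Complex.exp_add]
      congr 1
      push_cast
      ring
    rw [← mul_div_assoc, step1, div_sub_div_same]
    have hg : Nterm m s τ z₁ z₂ j - Nterm m s τ z₁ z₂ j * xe τ z₁ j ^ (m + 1) =
        (Nterm m s τ z₁ z₂ j * ∑ k ∈ Finset.range (m + 1), xe τ z₁ j ^ k) * (1 - xe τ z₁ j) := by
      linear_combination (Nterm m s τ z₁ z₂ j) * geom_sum_mul (xe τ z₁ j) (m + 1)
    rw [hg, mul_div_assoc, div_self (hD j), mul_one, Finset.mul_sum]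
  -- per-k evaluation
  have hfin : ∀ k : ℕ, k ∈ Finset.range (m + 1) →
      (∑' j : ℤ, Nterm m s τ z₁ z₂ j * xe τ z₁ j ^ k) =
      Complex.exp ((Real.pi : ℂ) * I * ((k : ℂ) - (s : ℂ)) * (z₁ - z₂)) *
        Complex.exp (-(2 * (Real.pi : ℂ) * I * τ) *
          ((k : ℂ) - (s : ℂ)) ^ 2 / (4 * ((m : ℂ) + 1))) *
        Theta ((k : ℤ) - s) (m + 1) τ (z₁ + z₂) := by
    intro k _
    rw [Theta, ← tsum_mul_left]
    refine tsum_congr fun j => ?_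
    simp only [Nterm, xe, mul_pow, exp_zpow, ← Complex.exp_nat_mul, ← Complex.exp_add]
    congr 1
    push_cast
    field_simp
    ring
  rw [phi1_eq, phi1_eq, ← tsum_mul_left, ← Summable.tsum_sub hS1 (hS2.mul_left _)]
  calc ∑' j : ℤ, (Nterm m s τ z₁ z₂ j / (1 - xe τ z₁ j) -
        Complex.exp (2 * (Real.pi : ℂ) * I * ((m : ℂ) + 1) * z₁) *
          (Nterm m s τ z₁ (z₂ + τ) j / (1 - xe τ z₁ j)))
      = ∑' j : ℤ, ∑ k ∈ Finset.range (m + 1), Nterm m s τ z₁ z₂ j * xe τ z₁ j ^ k :=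
        tsum_congr hdiff
    _ = ∑ k ∈ Finset.range (m + 1), ∑' j : ℤ, Nterm m s τ z₁ z₂ j * xe τ z₁ j ^ k :=
        Summable.tsum_finsetSum fun k _ => hSk k
    _ = _ := Finset.sum_congr rfl hfin
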